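/- Let N ≥ 1, R > 0, and α_1, …, α_N > 0. For any proper closed convex function F : E → ℝ ∪ {+∞} with minimizer x_*, and any sequence x_0, x_1, …, x_N with ‖x_0 − x_*‖ ≤ R and x_k = prox_{α_k F}(x_{k−1}) for each k, the final iterate satisfies F(x_N) − F(x_*) ≤ R² / (4 Σ_{k=1}^N α_k). -/

import Mathlib

set_option maxHeartbeats 2000000


open Finset

variable {E : Type*} [NormedAddCommGroup E] [InnerProductSpace ℝ E] [FiniteDimensional ℝ E]

/-- `f` is a proper, closed (lower semicontinuous) convex extended-real-valued function. -/
def IsProperClosedConvex (f : E → EReal) : Prop :=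
  (∃ x, f x ≠ ⊤) ∧ (∀ x, f x ≠ ⊥) ∧ LowerSemicontinuous f ∧
    ∀ x y : E, ∀ t : ℝ, 0 ≤ t → t ≤ 1 →
      f (t • x + (1 - t) • y) ≤ (t : EReal) * f x + ((1 - t : ℝ) : EReal) * f y

/-- `g` is a subgradient of `f` at `x`. -/
def IsSubgradientAt (f : E → EReal) (x g : E) : Prop :=
  ∀ y, f x + ((inner ℝ g (y - x) : ℝ) : EReal) ≤ f y

/-- Tight worst-case bound for the proximal point algorithm: `x_k = prox_{α_k F}(x_{k-1})`,
written equivalently as the implicit subgradient step `x_k = x_{k-1} − α_k g_k` with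
`g_k ∈ ∂F(x_k)`, satisfies `F(x_N) − F(x_*) ≤ R²/(4 Σ α_k)`. -/
theorem stmt10 (N : ℕ) (hN : 1 ≤ N) (R : ℝ) (hR : 0 < R) (α : ℕ → ℝ)
    (hα : ∀ k, 1 ≤ k → k ≤ N → 0 < α k)
    (F : E → EReal) (hF : IsProperClosedConvex F)
    (xstar : E) (hmin : ∀ y, F xstar ≤ F y)
    (x : ℕ → E) (g : ℕ → E) (hx0 : ‖x 0 - xstar‖ ≤ R)
    (hstep : ∀ k, 1 ≤ k → k ≤ N →
      IsSubgradientAt F (x k) (g k) ∧ x k = x (k - 1) - α k • g k) :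
    F (x N) - F xstar ≤ ((R ^ 2 / (4 * ∑ k ∈ Icc 1 N, α k) : ℝ) : EReal) := by
  classical
  obtain ⟨⟨z, hz⟩, hbot, _, _⟩ := hF
  -- F xstar is finite
  have hFsne_top : F xstar ≠ ⊤ := by
    intro h
    exact hz (top_le_iff.mp (h ▸ hmin z))
  set fstar : ℝ := (F xstar).toReal with hfstar_def
  have hFs : F xstar = (fstar : EReal) := (EReal.coe_toReal hFsne_top (hbot xstar)).symm
  -- F (x k) is finite for 1 ≤ k ≤ N
  set f : ℕ → ℝ := fun k => (F (x k)).toReal with hf_def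
  have hfin : ∀ k, 1 ≤ k → k ≤ N → F (x k) = ((f k : ℝ) : EReal) := by
    intro k h1 h2
    have hsg := (hstep k h1 h2).1 xstar
    have hnt : F (x k) ≠ ⊤ := by
      intro h
      rw [h, hFs] at hsg
      rw [EReal.top_add_coe] at hsg
      exact absurd hsg (not_le.mpr (EReal.coe_lt_top fstar))
    exact (EReal.coe_toReal hnt (hbot _)).symm
  -- the two families of real inequalities
  set p : ℕ → E := fun k => x k - xstar with hp_def
  have hineq1 : ∀ k, 1 ≤ k → k ≤ N →
      f k - fstar ≤ (inner ℝ (g k) (p k) : ℝ) := by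
    intro k h1 h2
    have hsg := (hstep k h1 h2).1 xstar
    rw [hfin k h1 h2, hFs, ← EReal.coe_add, EReal.coe_le_coe_iff] at hsg
    have hin : (inner ℝ (g k) (xstar - x k) : ℝ) = -(inner ℝ (g k) (p k) : ℝ) := by
      rw [show xstar - x k = -(p k) by simp [hp_def], inner_neg_right]
    rw [hin] at hsg
    linarith
  have hineq2 : ∀ k, 1 ≤ k → k + 1 ≤ N →
      f (k+1) + α (k+1) * (inner ℝ (g (k+1)) (g (k+1)) : ℝ) ≤ f k := by
    intro k h1 h2
    have hsg := (hstep (k+1) (by omega) h2).1 (x k)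
    have hxk : x (k+1) = x k - α (k+1) • g (k+1) := by
      have := (hstep (k+1) (by omega) h2).2
      simpa using this
    have hin : x k - x (k+1) = α (k+1) • g (k+1) := by
      rw [hxk]; abel
    rw [hin, real_inner_smul_right] at hsg
    rw [hfin (k+1) (by omega) h2, hfin k h1 (by omega), ← EReal.coe_add,
      EReal.coe_le_coe_iff] at hsg
    linarith
  -- scalar sequences
  set tt : ℕ → ℝ := fun m => ∑ i ∈ Icc 1 m, α i with htt_def
  have hTsum : (∑ k ∈ Icc 1 N, α k) = tt N := rfl
  set T : ℝ := tt N with hT_def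
  have htt0 : tt 0 = 0 := by simp [htt_def]
  have httsucc : ∀ m : ℕ, tt (m+1) = tt m + α (m+1) := by
    intro m
    simp only [htt_def]
    exact Finset.sum_Icc_succ_top (by omega) α
  have hT : 0 < T := by
    rw [hT_def, htt_def]
    refine Finset.sum_pos (fun i hi => ?_) ⟨1, Finset.mem_Icc.mpr ⟨le_refl 1, hN⟩⟩
    rw [Finset.mem_Icc] at hi
    exact hα i hi.1 hi.2
  have httnonneg : ∀ m, m ≤ N → 0 ≤ tt m := by
    intro m hm
    rw [htt_def]
    refine Finset.sum_nonneg fun i hi => ?_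
    rw [Finset.mem_Icc] at hi
    exact (hα i hi.1 (hi.2.trans hm)).le
  have httle : ∀ m, m ≤ N → tt m ≤ T := by
    intro m hm
    rw [hT_def, htt_def]
    refine Finset.sum_le_sum_of_subset_of_nonneg (Finset.Icc_subset_Icc_right hm)
      fun i hi _ => ?_
    rw [Finset.mem_Icc] at hi
    exact (hα i hi.1 hi.2).le
  have hw : ∀ m, m ≤ N → 0 < 2 * T - tt m := by
    intro m hm
    have := httle m hm
    linarith
  set Lam : ℕ → ℝ := fun m => T * tt m / (2 * T - tt m) with hLam_def
  set Bf : ℕ → ℝ := fun m => T * (T - tt m) / (2 * T - tt m) ^ 2 with hBf_def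
  have hLam0 : Lam 0 = 0 := by simp [hLam_def, htt0]
  have hLamN : Lam N = T := by
    simp only [hLam_def, ← hT_def]
    rw [show 2 * T - T = T by ring]
    field_simp
  have hBN : Bf N = 0 := by
    simp only [hBf_def, ← hT_def]
    simp
  have hB0 : Bf 0 = 1 / 4 := by
    simp only [hBf_def, htt0]
    rw [sub_zero, sub_zero]
    field_simp
    ring
  have hLamnonneg : ∀ m, m ≤ N → 0 ≤ Lam m := by
    intro m hm
    exact div_nonneg (mul_nonneg hT.le (httnonneg m hm)) (hw m hm).le
  have hLammono : ∀ m, m + 1 ≤ N → 0 ≤ Lam (m+1) - Lam m := by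
    intro m hm
    have hu := hw m (by omega)
    have hv := hw (m+1) hm
    have ha := hα (m+1) (by omega) hm
    have hs := httsucc m
    have h1 : Lam m ≤ Lam (m+1) := by
      simp only [hLam_def]
      rw [div_le_div_iff₀ hu hv, hs]
      have ht0 := httnonneg m (by omega)
      have hid : T * (tt m + α (m+1)) * (2 * T - tt m)
          - T * tt m * (2 * T - (tt m + α (m+1))) = 2 * T^2 * α (m+1) := by ring
      have hpos : 0 < 2 * T^2 * α (m+1) := by positivity
      linarith
    linarith
  -- relation p (m+1) = p m - α (m+1) • g (m+1)
  have hpsucc : ∀ m, m + 1 ≤ N → p (m+1) = p m - α (m+1) • g (m+1) := by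
    intro m hm
    have hxk : x (m+1) = x m - α (m+1) • g (m+1) := by
      have := (hstep (m+1) (by omega) hm).2
      simpa using this
    simp only [hp_def]
    rw [hxk]; abel
  -- the key downward induction
  have key : ∀ j m, m + j = N →
      (∑ k ∈ Finset.Ico m N,
        ((Lam (k+1) - Lam k) * (inner ℝ (g (k+1)) (p (k+1)) : ℝ)
          - Lam k * α (k+1) * (inner ℝ (g (k+1)) (g (k+1)) : ℝ)))
        ≤ Bf m * (inner ℝ (p m) (p m) : ℝ) := by
    intro j
    induction j with
    | zero =>
      intro m hm
      have hmN : m = N := by omega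
      subst hmN
      rw [Finset.Ico_self, Finset.sum_empty, hBN, zero_mul]
    | succ j ih =>
      intro m hm
      have hmN : m < N := by omega
      rw [Finset.sum_eq_sum_Ico_succ_bot hmN]
      have ihm := ih (m+1) (by omega)
      -- abbreviations
      set a : ℝ := α (m+1) with ha_def
      have ha : 0 < a := hα (m+1) (by omega) (by omega)
      set t : ℝ := tt m with ht_def2
      have htm1 : tt (m+1) = t + a := httsucc m
      have ht0 : 0 ≤ t := httnonneg m (by omega)
      have hsT : t + a ≤ T := by rw [← htm1]; exact httle (m+1) (by omega)
      have hu : 0 < 2 * T - t := hw m (by omega)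
      have hv : 0 < 2 * T - (t + a) := by
        rw [← htm1]; exact hw (m+1) (by omega)
      set q : E := p m with hq_def
      set gg : E := g (m+1) with hgg_def
      set X : ℝ := (inner ℝ gg q : ℝ) with hX_def
      set G : ℝ := (inner ℝ gg gg : ℝ) with hG_def
      set P : ℝ := (inner ℝ q q : ℝ) with hP_def
      have hp1 : p (m+1) = q - a • gg := hpsucc m (by omega)
      have hX1 : (inner ℝ gg (p (m+1)) : ℝ) = X - a * G := by
        rw [hp1, inner_sub_right, real_inner_smul_right]
      have hcomm : (inner ℝ q gg : ℝ) = X := by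
        rw [hX_def]; exact real_inner_comm gg q
      have hP1 : (inner ℝ (p (m+1)) (p (m+1)) : ℝ) = P - 2 * a * X + a ^ 2 * G := by
        rw [hp1]
        simp only [inner_sub_left, inner_sub_right, real_inner_smul_left,
          real_inner_smul_right]
        simp only [hcomm, ← hX_def, ← hG_def, ← hP_def]
        ring
      -- closed forms
      have hLm : Lam m = T * t / (2 * T - t) := rfl
      have hLm1 : Lam (m+1) = T * (t + a) / (2 * T - (t + a)) := by
        simp only [hLam_def]; rw [htm1]
      have hBm : Bf m = T * (T - t) / (2 * T - t) ^ 2 := rfl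
      have hBm1 : Bf (m+1) = T * (T - (t + a)) / (2 * T - (t + a)) ^ 2 := by
        simp only [hBf_def]; rw [htm1]
      obtain ⟨c1, hc1_def⟩ : ∃ c : ℝ, c = Bf m - Bf (m+1) := ⟨_, rfl⟩
      obtain ⟨c2, hc2_def⟩ : ∃ c : ℝ, c = (Lam (m+1) - Lam m) - 2 * a * Bf (m+1) := ⟨_, rfl⟩
      obtain ⟨c3, hc3_def⟩ : ∃ c : ℝ, c = a * Lam (m+1) - a ^ 2 * Bf (m+1) := ⟨_, rfl⟩
      have hu' : (2 * T - t) ≠ 0 := ne_of_gt hu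
      have hv' : (2 * T - (t + a)) ≠ 0 := ne_of_gt hv
      have hc3eq : c3 = a * T * (t * (2 * T - (t + a)) + a * T) / (2 * T - (t + a)) ^ 2 := by
        rw [hc3_def, hLm1, hBm1]
        field_simp
        ring
      have hc3pos : 0 < c3 := by
        rw [hc3eq]
        have h1 : 0 < t * (2 * T - (t + a)) + a * T :=
          add_pos_of_nonneg_of_pos (mul_nonneg ht0 hv.le) (mul_pos ha hT)
        exact div_pos (mul_pos (mul_pos ha hT) h1) (pow_pos hv 2)
      have hdisc : c2 ^ 2 = 4 * (c1 * c3) := by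
        rw [hc1_def, hc2_def, hc3_def, hLm, hLm1, hBm, hBm1]
        obtain ⟨U, hU⟩ : ∃ U, U = 2 * T - t := ⟨_, rfl⟩
        obtain ⟨V, hV⟩ : ∃ V, V = 2 * T - (t + a) := ⟨_, rfl⟩
        have hU0 : U ≠ 0 := hU ▸ hu'
        have hV0 : V ≠ 0 := hV ▸ hv'
        rw [← hV]
        rw [← hU]
        rw [show t = 2 * T - U by linarith, show a = U - V by linarith]
        field_simp
        ring
      -- quadratic nonnegativity
      have hquad : 0 ≤ c1 * P - c2 * X + c3 * G := by
        have hvec : (0:ℝ) ≤ (inner ℝ ((2*c3) • gg - c2 • q) ((2*c3) • gg - c2 • q) : ℝ) :=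
          real_inner_self_nonneg
        have hexp : (inner ℝ ((2*c3) • gg - c2 • q) ((2*c3) • gg - c2 • q) : ℝ)
            = 4 * c3^2 * G - 4 * c3 * c2 * X + c2^2 * P := by
          simp only [inner_sub_left, inner_sub_right, real_inner_smul_left,
            real_inner_smul_right]
          simp only [hcomm, ← hX_def, ← hG_def, ← hP_def]
          ring
        rw [hexp] at hvec
        have h5 : (4*c3) * (c1 * P - c2 * X + c3 * G)
            = 4 * c3^2 * G - 4 * c3 * c2 * X + c2^2 * P := by
          linear_combination (-P) * hdisc
        have h6 : 0 ≤ (4*c3) * (c1 * P - c2 * X + c3 * G) := by rw [h5]; exact hvec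
        exact (mul_nonneg_iff_of_pos_left (by linarith : (0:ℝ) < 4*c3)).mp h6
      -- the one-step inequality
      have honestep : (Lam (m+1) - Lam m) * (X - a * G) - Lam m * a * G
          + Bf (m+1) * (P - 2 * a * X + a ^ 2 * G) ≤ Bf m * P := by
        have hrel : Bf m * P - ((Lam (m+1) - Lam m) * (X - a * G) - Lam m * a * G
            + Bf (m+1) * (P - 2 * a * X + a ^ 2 * G)) = c1 * P - c2 * X + c3 * G := by
          rw [hc1_def, hc2_def, hc3_def]
          ring
        linarith [hquad, hrel]
      calc ((Lam (m+1) - Lam m) * (inner ℝ (g (m+1)) (p (m+1)) : ℝ)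
              - Lam m * α (m+1) * (inner ℝ (g (m+1)) (g (m+1)) : ℝ))
            + ∑ k ∈ Finset.Ico (m+1) N,
              ((Lam (k+1) - Lam k) * (inner ℝ (g (k+1)) (p (k+1)) : ℝ)
                - Lam k * α (k+1) * (inner ℝ (g (k+1)) (g (k+1)) : ℝ))
          ≤ ((Lam (m+1) - Lam m) * (inner ℝ (g (m+1)) (p (m+1)) : ℝ)
              - Lam m * α (m+1) * (inner ℝ (g (m+1)) (g (m+1)) : ℝ))
            + Bf (m+1) * (inner ℝ (p (m+1)) (p (m+1)) : ℝ) := by linarith [ihm]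
        _ ≤ Bf m * P := by
            rw [hX1, hP1]
            simpa only [← hgg_def, ← ha_def, ← hG_def] using honestep
  -- telescoping function-value part
  have htele : ∑ k ∈ Finset.range N,
      (Lam (k+1) * (f (k+1) - fstar) - Lam k * (f k - fstar))
      = Lam N * (f N - fstar) - Lam 0 * (f 0 - fstar) :=
    Finset.sum_range_sub (fun k => Lam k * (f k - fstar)) N
  have hsum2 : T * (f N - fstar) ≤
      ∑ k ∈ Finset.Ico 0 N,
        ((Lam (k+1) - Lam k) * (inner ℝ (g (k+1)) (p (k+1)) : ℝ)
          - Lam k * α (k+1) * (inner ℝ (g (k+1)) (g (k+1)) : ℝ)) := by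
    have hterm : ∀ k ∈ Finset.range N,
        Lam (k+1) * (f (k+1) - fstar) - Lam k * (f k - fstar)
        ≤ (Lam (k+1) - Lam k) * (inner ℝ (g (k+1)) (p (k+1)) : ℝ)
          - Lam k * α (k+1) * (inner ℝ (g (k+1)) (g (k+1)) : ℝ) := by
      intro k hk
      rw [Finset.mem_range] at hk
      have h1 := hineq1 (k+1) (by omega) (by omega)
      have hlm := hLammono k (by omega)
      have hterm1 : (Lam (k+1) - Lam k) * (f (k+1) - fstar)
          ≤ (Lam (k+1) - Lam k) * (inner ℝ (g (k+1)) (p (k+1)) : ℝ) :=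
        mul_le_mul_of_nonneg_left h1 hlm
      rcases Nat.eq_zero_or_pos k with hk0 | hkpos
      · subst hk0
        rw [hLam0] at hterm1 ⊢
        simpa using hterm1
      · have h2 := hineq2 k hkpos (by omega)
        have hlk := hLamnonneg k (by omega)
        have hterm2 : Lam k * ((f (k+1) - fstar) - (f k - fstar))
            ≤ Lam k * (-(α (k+1) * (inner ℝ (g (k+1)) (g (k+1)) : ℝ))) :=
          mul_le_mul_of_nonneg_left (by linarith) hlk
        have hid : Lam (k+1) * (f (k+1) - fstar) - Lam k * (f k - fstar)
            = (Lam (k+1) - Lam k) * (f (k+1) - fstar)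
              + Lam k * ((f (k+1) - fstar) - (f k - fstar)) := by ring
        have hid2 : Lam k * (-(α (k+1) * (inner ℝ (g (k+1)) (g (k+1)) : ℝ)))
            = -(Lam k * α (k+1) * (inner ℝ (g (k+1)) (g (k+1)) : ℝ)) := by ring
        rw [hid]
        rw [hid2] at hterm2
        linarith
    calc T * (f N - fstar)
        = Lam N * (f N - fstar) - Lam 0 * (f 0 - fstar) := by
          rw [hLamN, hLam0]; ring
      _ = ∑ k ∈ Finset.range N,
            (Lam (k+1) * (f (k+1) - fstar) - Lam k * (f k - fstar)) := htele.symm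
      _ ≤ ∑ k ∈ Finset.range N,
            ((Lam (k+1) - Lam k) * (inner ℝ (g (k+1)) (p (k+1)) : ℝ)
              - Lam k * α (k+1) * (inner ℝ (g (k+1)) (g (k+1)) : ℝ)) :=
          Finset.sum_le_sum hterm
      _ = _ := by rw [Finset.range_eq_Ico]
  have hkey0 := key N 0 (by omega)
  have hp0 : (inner ℝ (p 0) (p 0) : ℝ) = ‖p 0‖ ^ 2 := real_inner_self_eq_norm_sq (p 0)
  have hp0le : ‖p 0‖ ^ 2 ≤ R ^ 2 := by
    have : ‖p 0‖ ≤ R := hx0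
    exact pow_le_pow_left₀ (norm_nonneg _) this 2
  have hmain : T * (f N - fstar) ≤ R ^ 2 / 4 := by
    have h := le_trans hsum2 hkey0
    rw [hB0, hp0] at h
    linarith
  have hfinal : f N - fstar ≤ R ^ 2 / (4 * T) := by
    rw [le_div_iff₀ (by positivity)]
    have hid : (f N - fstar) * (4 * T) = 4 * (T * (f N - fstar)) := by ring
    linarith [hmain, hid.le, hid.ge]
  rw [hfin N hN le_rfl, hFs, ← EReal.coe_sub, hTsum]
  exact EReal.coe_le_coe_iff.mpr hfinal
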